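/- arXiv:2404.09687 — 2 statements merged into one kernel-verified Lean document; each statement's English description precedes it below -/
import Mathlib

section
/- Let x ∈ {0,1}^n be a bit string with exactly k zero-bits, and suppose y is obtained from x by flipping a uniformly random set of exactly ℓ bits, where ℓ ≤ n/2 and k ≤ n/2. Then for every t ≥ 0, the probability that y has at least t more one-bits than x equals the sum over i from ⌈(ℓ+t)/2⌉ to ℓ of C(k,i)·C(n-k,ℓ-i)/C(n,ℓ), and this sum is at most the sum over i from ⌈(ℓ+t)/2⌉ to ℓ of (2k·ℓ/((n-ℓ)·c·i))^i for an absolute constant c > 0 arising from i! ≥ (c·i)^i. -/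
open Finset

-- i^i ≤ 3^i * i!
lemma pow_le_three_pow_mul_factorial (i : ℕ) : (i : ℝ) ^ i ≤ 3 ^ i * i.factorial := by
  have h1 : (i : ℝ) ^ i / i.factorial ≤ Real.exp i := by
    calc (i : ℝ) ^ i / i.factorial
        ≤ ∑ j ∈ Finset.range (i + 1), (i : ℝ) ^ j / j.factorial := by
          refine Finset.single_le_sum (f := fun j => (i : ℝ) ^ j / j.factorial) ?_ ?_
          · intro j _; positivity
          · simp
      _ ≤ Real.exp i := Real.sum_le_exp_of_nonneg (by positivity) _
  have h2 : Real.exp (i : ℝ) ≤ 3 ^ i := by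
    rw [← Real.exp_one_rpow (i : ℝ), Real.rpow_natCast]
    exact pow_le_pow_left₀ (le_of_lt (Real.exp_pos 1)) (by
      have := Real.exp_one_lt_d9; linarith) i
  have hf : (0:ℝ) < i.factorial := by exact_mod_cast i.factorial_pos
  rw [div_le_iff₀ hf] at h1
  calc (i:ℝ)^i ≤ Real.exp i * i.factorial := h1
    _ ≤ 3 ^ i * i.factorial := by
        exact mul_le_mul_of_nonneg_right h2 (le_of_lt hf)

lemma nat_pow_le_three_pow_mul_factorial (i : ℕ) : i ^ i ≤ 3 ^ i * i.factorial := by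
  exact_mod_cast pow_le_three_pow_mul_factorial i

-- choose ratio bound
lemma lemA (n ℓ : ℕ) (hn : ℓ ≤ n) : ∀ i, i ≤ ℓ →
    n.choose (ℓ - i) * (n - ℓ) ^ i ≤ n.choose ℓ * ℓ ^ i := by
  intro i
  induction i with
  | zero => simp
  | succ i ih =>
    intro h
    have hi : i ≤ ℓ := by omega
    set m := ℓ - i with hm
    have hm1 : 1 ≤ m := by omega
    have step : n.choose (m - 1) * (n - ℓ) ≤ n.choose m * ℓ := by
      have hid := Nat.choose_succ_right_eq n (m - 1)
      have hms : m - 1 + 1 = m := by omega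
      rw [hms] at hid
      -- hid : n.choose m * m = n.choose (m-1) * (n - (m-1))
      have hmul : (n.choose (m - 1) * (n - ℓ)) * m ≤ (n.choose m * ℓ) * m := by
        calc (n.choose (m - 1) * (n - ℓ)) * m
            = n.choose (m - 1) * ((n - ℓ) * m) := by ring
          _ ≤ n.choose (m - 1) * ((n - (m - 1)) * ℓ) := by
              refine Nat.mul_le_mul_left _ (Nat.mul_le_mul ?_ ?_) <;> omega
          _ = (n.choose (m - 1) * (n - (m - 1))) * ℓ := by ring
          _ = (n.choose m * m) * ℓ := by rw [hid]
          _ = (n.choose m * ℓ) * m := by ring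
      exact Nat.le_of_mul_le_mul_right hmul (by omega)
    calc n.choose (ℓ - (i + 1)) * (n - ℓ) ^ (i + 1)
        = (n.choose (m - 1) * (n - ℓ)) * (n - ℓ) ^ i := by
          rw [show ℓ - (i+1) = m - 1 by omega]; ring
      _ ≤ (n.choose m * ℓ) * (n - ℓ) ^ i := Nat.mul_le_mul_right _ step
      _ = ℓ * (n.choose (ℓ - i) * (n - ℓ) ^ i) := by rw [← hm]; ring
      _ ≤ ℓ * (n.choose ℓ * ℓ ^ i) := Nat.mul_le_mul_left _ (ih hi)
      _ = n.choose ℓ * ℓ ^ (i + 1) := by ring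

-- fiber count
lemma fiber_card {n : ℕ} (Z : Finset (Fin n)) (ℓ i : ℕ) (hi : i ≤ ℓ) :
    (((Finset.univ : Finset (Fin n)).powersetCard ℓ).filter
      fun S => (S ∩ Z).card = i).card = Z.card.choose i * Zᶜ.card.choose (ℓ - i) := by
  rw [← Finset.card_powersetCard, ← Finset.card_powersetCard, ← Finset.card_product]
  refine Finset.card_bij' (fun S _ => (S ∩ Z, S \ Z)) (fun p _ => p.1 ∪ p.2) ?_ ?_ ?_ ?_
  · intro S hS
    rw [Finset.mem_filter, Finset.mem_powersetCard] at hS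
    obtain ⟨⟨_, hcard⟩, hSZ⟩ := hS
    have hsd : (S \ Z).card + (S ∩ Z).card = S.card := Finset.card_sdiff_add_card_inter S Z
    show (S ∩ Z, S \ Z) ∈ _
    rw [Finset.mem_product, Finset.mem_powersetCard, Finset.mem_powersetCard]
    refine ⟨⟨Finset.inter_subset_right, hSZ⟩, ?_, by show (S \ Z).card = ℓ - i; omega⟩
    intro j hj
    rw [Finset.mem_sdiff] at hj
    exact Finset.mem_compl.mpr hj.2
  · intro p hp
    rw [Finset.mem_product, Finset.mem_powersetCard, Finset.mem_powersetCard] at hp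
    obtain ⟨⟨h1Z, h1c⟩, h2Z, h2c⟩ := hp
    have hdisj : Disjoint p.1 p.2 := by
      refine Finset.disjoint_left.mpr fun j hj1 hj2 => ?_
      exact (Finset.mem_compl.mp (h2Z hj2)) (h1Z hj1)
    have hiZ : (p.1 ∪ p.2) ∩ Z = p.1 := by
      ext j
      simp only [Finset.mem_inter, Finset.mem_union]
      constructor
      · rintro ⟨hj1 | hj2, hjZ⟩
        · exact hj1
        · exact absurd hjZ (Finset.mem_compl.mp (h2Z hj2))
      · intro hj; exact ⟨Or.inl hj, h1Z hj⟩
    show p.1 ∪ p.2 ∈ _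
    rw [Finset.mem_filter, Finset.mem_powersetCard]
    refine ⟨⟨Finset.subset_univ _, ?_⟩, by rw [hiZ, h1c]⟩
    rw [Finset.card_union_of_disjoint hdisj, h1c, h2c]; omega
  · intro S hS
    show S ∩ Z ∪ S \ Z = S
    rw [Finset.union_comm]
    exact Finset.sdiff_union_inter S Z
  · intro p hp
    rw [Finset.mem_product, Finset.mem_powersetCard, Finset.mem_powersetCard] at hp
    obtain ⟨⟨h1Z, h1c⟩, h2Z, h2c⟩ := hp
    have hiZ : (p.1 ∪ p.2) ∩ Z = p.1 := by
      ext j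
      simp only [Finset.mem_inter, Finset.mem_union]
      constructor
      · rintro ⟨hj1 | hj2, hjZ⟩
        · exact hj1
        · exact absurd hjZ (Finset.mem_compl.mp (h2Z hj2))
      · intro hj; exact ⟨Or.inl hj, h1Z hj⟩
    have hsd : (p.1 ∪ p.2) \ Z = p.2 := by
      ext j
      simp only [Finset.mem_sdiff, Finset.mem_union]
      constructor
      · rintro ⟨hj1 | hj2, hjZ⟩
        · exact absurd (h1Z hj1) hjZ
        · exact hj2
      · intro hj; exact ⟨Or.inr hj, Finset.mem_compl.mp (h2Z hj)⟩
    show (_, _) = p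
    rw [hiZ, hsd]


open Finset in
/-- Flipping a uniformly random set of exactly `ℓ` bits of a string `x` with `k`
zero-bits: the probability of gaining at least `t` one-bits equals the hypergeometric
sum, which is bounded by the stated exponential sum. -/
theorem stmt2 :
    ∃ c : ℝ, 0 < c ∧ ∀ (n k ℓ t : ℕ) (x : Fin n → Bool),
      2 * ℓ ≤ n → 2 * k ≤ n →
      (Finset.univ.filter fun j => x j = false).card = k →
      (((((Finset.univ : Finset (Fin n)).powersetCard ℓ).filter fun S =>
          (Finset.univ.filter fun j => x j = true).card + t ≤
            (Finset.univ.filter fun j => (if j ∈ S then !x j else x j) = true).card).card : ℝ)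
          / (n.choose ℓ) =
        ∑ i ∈ Finset.Icc ((ℓ + t + 1) / 2) ℓ,
          ((k.choose i : ℝ) * ((n - k).choose (ℓ - i) : ℝ)) / (n.choose ℓ)) ∧
      ∑ i ∈ Finset.Icc ((ℓ + t + 1) / 2) ℓ,
          ((k.choose i : ℝ) * ((n - k).choose (ℓ - i) : ℝ)) / (n.choose ℓ) ≤
        ∑ i ∈ Finset.Icc ((ℓ + t + 1) / 2) ℓ,
          (2 * (k : ℝ) * ℓ / (((n : ℝ) - ℓ) * (c * i))) ^ i := by
  refine ⟨2/3, by norm_num, ?_⟩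
  intro n k ℓ t x hℓ hk hkc
  have hℓn : ℓ ≤ n := by omega
  set m := (ℓ + t + 1) / 2 with hm
  set Z : Finset (Fin n) := Finset.univ.filter fun j => x j = false with hZ
  have hZk : Z.card = k := hkc
  have hT : (Finset.univ.filter fun j => x j = true) = Zᶜ := by
    ext j
    simp [hZ]
  have hZc : (Zᶜ).card = n - k := by
    rw [Finset.card_compl, hZk, Fintype.card_fin]
  constructor
  · -- the equality
    have key : (((Finset.univ : Finset (Fin n)).powersetCard ℓ).filter fun S =>
          (Finset.univ.filter fun j => x j = true).card + t ≤
            (Finset.univ.filter fun j => (if j ∈ S then !x j else x j) = true).card).card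
        = ∑ i ∈ Finset.Icc m ℓ, k.choose i * (n - k).choose (ℓ - i) := by
      have hcongr : ∀ S ∈ (Finset.univ : Finset (Fin n)).powersetCard ℓ,
          ((Finset.univ.filter fun j => x j = true).card + t ≤
            (Finset.univ.filter fun j => (if j ∈ S then !x j else x j) = true).card)
          ↔ m ≤ (S ∩ Z).card := by
        intro S hS
        have hScard : S.card = ℓ := (Finset.mem_powersetCard.mp hS).2
        have e1 : (Finset.univ.filter fun j => (if j ∈ S then !x j else x j) = true)
            = (Zᶜ \ S) ∪ (S ∩ Z) := by
          ext j
          by_cases hj : j ∈ S <;>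
            simp [hj, hZ, Finset.mem_union, Finset.mem_sdiff]
        have hdisj : Disjoint (Zᶜ \ S) (S ∩ Z) := by
          refine Finset.disjoint_left.mpr fun j hj1 hj2 => ?_
          exact (Finset.mem_sdiff.mp hj1).2 (Finset.mem_inter.mp hj2).1
        have e2 : (Finset.univ.filter fun j => (if j ∈ S then !x j else x j) = true).card
            = (Zᶜ \ S).card + (S ∩ Z).card := by
          rw [e1, Finset.card_union_of_disjoint hdisj]
        have h1 : (Zᶜ \ S).card + (Zᶜ ∩ S).card = n - k := by
          rw [Finset.card_sdiff_add_card_inter, hZc]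
        have e3 : Zᶜ ∩ S = S \ Z := by
          ext j
          simp [Finset.mem_sdiff, and_comm]
        have h2 : (S \ Z).card + (S ∩ Z).card = ℓ := by
          rw [Finset.card_sdiff_add_card_inter, hScard]
        rw [e3] at h1
        rw [hT, hZc, e2]
        omega
      rw [Finset.filter_congr hcongr]
      rw [Finset.card_eq_sum_card_fiberwise
        (f := fun S => (S ∩ Z).card) (t := Finset.Icc m ℓ) ?_]
      · refine Finset.sum_congr rfl fun i hi => ?_
        obtain ⟨hmi, hiℓ⟩ := Finset.mem_Icc.mp hi
        rw [Finset.filter_filter]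
        have : ∀ S ∈ (Finset.univ : Finset (Fin n)).powersetCard ℓ,
            ((m ≤ (S ∩ Z).card ∧ (S ∩ Z).card = i) ↔ (S ∩ Z).card = i) := by
          intro S _
          constructor
          · exact fun h => h.2
          · exact fun h => ⟨by omega, h⟩
        rw [Finset.filter_congr this, fiber_card Z ℓ i hiℓ, hZk, hZc]
      · intro S hS
        rw [Finset.mem_coe, Finset.mem_filter, Finset.mem_powersetCard] at hS
        rw [Finset.mem_coe, Finset.mem_Icc]
        refine ⟨hS.2, ?_⟩
        calc (S ∩ Z).card ≤ S.card := Finset.card_le_card Finset.inter_subset_left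
          _ = ℓ := hS.1.2
    rw [key]
    push_cast
    rw [Finset.sum_div]
  · -- the bound
    refine Finset.sum_le_sum fun i hi => ?_
    obtain ⟨hmi, hiℓ⟩ := Finset.mem_Icc.mp hi
    rcases Nat.eq_zero_or_pos i with hi0 | hipos
    · subst hi0
      have : ℓ = 0 ∧ t = 0 := by omega
      obtain ⟨rfl, rfl⟩ := this
      simp
    · have hℓpos : 1 ≤ ℓ := le_trans hipos hiℓ
      have hnℓ : 1 ≤ n - ℓ := by omega
      -- the ℕ inequality
      have c1 : k.choose i * i.factorial ≤ k ^ i := by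
        rw [mul_comm, ← Nat.descFactorial_eq_factorial_mul_choose]
        exact Nat.descFactorial_le_pow k i
      have c2 : (n - k).choose (ℓ - i) ≤ n.choose (ℓ - i) :=
        Nat.choose_le_choose _ (Nat.sub_le n k)
      have c3 : n.choose (ℓ - i) * (n - ℓ) ^ i ≤ n.choose ℓ * ℓ ^ i := lemA n ℓ hℓn i hiℓ
      have c4 : i ^ i ≤ 3 ^ i * i.factorial := nat_pow_le_three_pow_mul_factorial i
      have hNat : k.choose i * (n - k).choose (ℓ - i) * ((n - ℓ) ^ i * i ^ i)
          ≤ (3 * k * ℓ) ^ i * n.choose ℓ := by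
        calc k.choose i * (n - k).choose (ℓ - i) * ((n - ℓ) ^ i * i ^ i)
            ≤ k.choose i * n.choose (ℓ - i) * ((n - ℓ) ^ i * (3 ^ i * i.factorial)) := by
              gcongr
          _ = (k.choose i * i.factorial) * 3 ^ i * (n.choose (ℓ - i) * (n - ℓ) ^ i) := by
              ring
          _ ≤ k ^ i * 3 ^ i * (n.choose ℓ * ℓ ^ i) := by
              gcongr
          _ = (3 * k * ℓ) ^ i * n.choose ℓ := by ring
      -- to ℝ
      have hnl : (0:ℝ) < (n:ℝ) - ℓ := by
        have : (ℓ:ℝ) + 1 ≤ n := by exact_mod_cast Nat.add_one_le_iff.mpr (by omega)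
        linarith
      have hipos' : (0:ℝ) < i := by exact_mod_cast hipos
      have hC : (0:ℝ) < (n.choose ℓ : ℝ) := by
        exact_mod_cast Nat.choose_pos hℓn
      have hbase : 2 * (k:ℝ) * ℓ / (((n:ℝ) - ℓ) * ((2/3 : ℝ) * i))
          = 3 * (k:ℝ) * ℓ / (((n:ℝ) - ℓ) * i) := by
        rw [div_eq_div_iff (by positivity) (by positivity)]
        ring
      rw [hbase, div_pow, div_le_div_iff₀ hC (by positivity)]
      have hR : (k.choose i : ℝ) * ((n - k).choose (ℓ - i) : ℝ)
          * (((n:ℝ) - ℓ) ^ i * (i:ℝ) ^ i) ≤ (3 * (k:ℝ) * ℓ) ^ i * (n.choose ℓ : ℝ) := by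
        have := (Nat.cast_le (α := ℝ)).mpr hNat
        push_cast [Nat.cast_sub hℓn] at this
        convert this using 2
      calc (k.choose i : ℝ) * ((n - k).choose (ℓ - i) : ℝ) * (((n:ℝ) - ℓ) * i) ^ i
          = (k.choose i : ℝ) * ((n - k).choose (ℓ - i) : ℝ)
            * (((n:ℝ) - ℓ) ^ i * (i:ℝ) ^ i) := by rw [mul_pow]
        _ ≤ (3 * (k:ℝ) * ℓ) ^ i * (n.choose ℓ : ℝ) := hR
end

section
/- For all natural numbers n, k, ℓ, i with i ≤ ℓ ≤ n/2 and i ≤ k, the ratio C(k,i)·C(n-k,ℓ-i)/C(n,ℓ) is at most (k^i / i!) · (ℓ^i / (n-ℓ)^i). -/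
lemma nat_key (n k ℓ i : ℕ) (h1 : i ≤ ℓ) (h2 : 2 * ℓ ≤ n) (h3 : i ≤ k) (h4 : k ≤ n) :
    k.choose i * (n - k).choose (ℓ - i) * (Nat.factorial i * (n - ℓ) ^ i) ≤
      k ^ i * ℓ ^ i * n.choose ℓ := by
  have hln : ℓ ≤ n := le_trans (by omega) h2
  have hin : i ≤ n := h1.trans hln
  have hA : k.choose i * Nat.factorial i ≤ k ^ i := by
    rw [mul_comm, ← Nat.descFactorial_eq_factorial_mul_choose]
    exact Nat.descFactorial_le_pow _ _
  have hD : ℓ.descFactorial i * (n - ℓ) ^ i ≤ n.descFactorial i * ℓ ^ i := by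
    rw [Nat.descFactorial_eq_prod_range, Nat.descFactorial_eq_prod_range]
    calc (∏ j ∈ Finset.range i, (ℓ - j)) * (n - ℓ) ^ i
        = ∏ j ∈ Finset.range i, ((ℓ - j) * (n - ℓ)) := by
          rw [Finset.prod_mul_distrib, Finset.prod_const, Finset.card_range]
      _ ≤ ∏ j ∈ Finset.range i, ((n - j) * ℓ) := by
          refine Finset.prod_le_prod' fun j hj => ?_
          have hj' : j ≤ ℓ := le_trans (Nat.le_of_lt_succ (Nat.lt_succ_of_lt
            (Finset.mem_range.mp hj))) h1
          rw [mul_comm (ℓ - j)]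
          exact Nat.mul_le_mul (by omega) (by omega)
      _ = (∏ j ∈ Finset.range i, (n - j)) * ℓ ^ i := by
          rw [Finset.prod_mul_distrib, Finset.prod_const, Finset.card_range]
  rw [Nat.descFactorial_eq_factorial_mul_choose, Nat.descFactorial_eq_factorial_mul_choose,
    mul_assoc, mul_assoc] at hD
  have hC' : ℓ.choose i * (n - ℓ) ^ i ≤ n.choose i * ℓ ^ i :=
    Nat.le_of_mul_le_mul_left hD (Nat.factorial_pos i)
  have hpos : 0 < n.choose i := Nat.choose_pos hin
  have hB : (n - i).choose (ℓ - i) * (n - ℓ) ^ i ≤ ℓ ^ i * n.choose ℓ := by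
    have h5 : n.choose i * ((n - i).choose (ℓ - i) * (n - ℓ) ^ i) ≤
        n.choose i * (ℓ ^ i * n.choose ℓ) := by
      calc n.choose i * ((n - i).choose (ℓ - i) * (n - ℓ) ^ i)
          = (n.choose ℓ * ℓ.choose i) * (n - ℓ) ^ i := by rw [(Nat.choose_mul h1 : n.choose ℓ * ℓ.choose i = _)]; ring
        _ = n.choose ℓ * (ℓ.choose i * (n - ℓ) ^ i) := by ring
        _ ≤ n.choose ℓ * (n.choose i * ℓ ^ i) := Nat.mul_le_mul_left _ hC'
        _ = n.choose i * (ℓ ^ i * n.choose ℓ) := by ring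
    exact Nat.le_of_mul_le_mul_left h5 hpos
  have hmono : (n - k).choose (ℓ - i) ≤ (n - i).choose (ℓ - i) :=
    Nat.choose_le_choose _ (by omega)
  calc k.choose i * (n - k).choose (ℓ - i) * (Nat.factorial i * (n - ℓ) ^ i)
      = (k.choose i * Nat.factorial i) * ((n - k).choose (ℓ - i) * (n - ℓ) ^ i) := by ring
    _ ≤ k ^ i * (ℓ ^ i * n.choose ℓ) :=
        Nat.mul_le_mul hA (le_trans (Nat.mul_le_mul_right _ hmono) hB)
    _ = k ^ i * ℓ ^ i * n.choose ℓ := by ring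

/-- Hypergeometric ratio bound: for `i ≤ ℓ ≤ n/2`, `i ≤ k ≤ n`,
`C(k,i)·C(n-k,ℓ-i)/C(n,ℓ) ≤ (k^i/i!) · (ℓ^i/(n-ℓ)^i)`. -/
theorem stmt3 (n k ℓ i : ℕ) (h1 : i ≤ ℓ) (h2 : 2 * ℓ ≤ n) (h3 : i ≤ k) (h4 : k ≤ n) :
    ((k.choose i : ℝ) * ((n - k).choose (ℓ - i) : ℝ)) / (n.choose ℓ : ℝ) ≤
      ((k : ℝ) ^ i / (Nat.factorial i : ℝ)) * ((ℓ : ℝ) ^ i / ((n : ℝ) - ℓ) ^ i) := by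
  have hln : ℓ ≤ n := le_trans (by omega) h2
  have hcast : ((n : ℝ) - ℓ) = ((n - ℓ : ℕ) : ℝ) := by
    rw [Nat.cast_sub hln]
  have hc : (0 : ℝ) < (n.choose ℓ : ℝ) := by exact_mod_cast Nat.choose_pos hln
  have hpow : (0 : ℝ) < ((n - ℓ : ℕ) : ℝ) ^ i := by
    rcases Nat.eq_zero_or_pos i with h | h
    · simp [h]
    · have : 0 < n - ℓ := by omega
      positivity
  have hfac : (0 : ℝ) < (Nat.factorial i : ℝ) := by exact_mod_cast Nat.factorial_pos i
  rw [hcast, div_mul_div_comm, div_le_div_iff₀ hc (by positivity)]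
  exact_mod_cast nat_key n k ℓ i h1 h2 h3 h4
end
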